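/- Let K be a finite abstract simplicial complex on the vertex set Fin n of dimension d ≥ 2. Then there exists a permutation π of Fin n such that, letting π(K) = { {π(v) : v ∈ σ} : σ ∈ K } be the relabeled complex, there exist two distinct words u ≠ u′ in L_{π(K)} with identical left quotients u⁻¹L_{π(K)} = u′⁻¹L_{π(K)}; consequently the number of distinct nonempty left quotients of L_{π(K)} is strictly less than |K| + 1. (Equivalently: some relabeling of the vertices makes the minimal Simplex Automaton strictly smaller than the Simplex Automaton.) -/

import Mathlib

/-- An abstract simplicial complex on vertex type `V`, given as a finite
collection of nonempty finite subsets of `V` closed under taking nonempty subsets. -/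
def IsSimplicialComplex {V : Type*} [DecidableEq V] (K : Finset (Finset V)) : Prop :=
  (∀ σ ∈ K, σ ≠ ∅) ∧ ∀ σ ∈ K, ∀ τ, τ ⊆ σ → τ ≠ ∅ → τ ∈ K

/-- The language of a simplicial complex `K`: the empty list together with all
strictly increasing lists whose set of entries is a simplex of `K`. -/
def simplexLang {V : Type*} [LinearOrder V] (K : Finset (Finset V)) : Set (List V) :=
  {[]} ∪ {l | l.Pairwise (· < ·) ∧ l.toFinset ∈ K}

/-- The left quotient `u⁻¹L = {w | u ++ w ∈ L}`. -/
def leftQuot {V : Type*} (L : Set (List V)) (u : List V) : Set (List V) :=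
  {w | u ++ w ∈ L}

/-- The set of distinct nonempty left quotients of a language `L`. -/
def nonemptyQuotients {V : Type*} (L : Set (List V)) : Set (Set (List V)) :=
  {S | S.Nonempty ∧ ∃ u : List V, S = leftQuot L u}

/-- `K` has dimension exactly `d`: some simplex has `d + 1` vertices and all
simplices have at most `d + 1` vertices. -/
def HasDimension {V : Type*} [DecidableEq V] (K : Finset (Finset V)) (d : ℕ) : Prop :=
  (∃ σ ∈ K, σ.card = d + 1) ∧ ∀ σ ∈ K, σ.card ≤ d + 1

section Aux

variable {n : ℕ}

/-- Membership in `simplexLang`. -/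
lemma mem_simplexLang_iff (K' : Finset (Finset (Fin n))) (l : List (Fin n)) :
    l ∈ simplexLang K' ↔ l = [] ∨ (l.Pairwise (· < ·) ∧ l.toFinset ∈ K') := by
  simp only [simplexLang, Set.mem_union, Set.mem_singleton_iff, Set.mem_setOf_eq]

/-- Prefix closure of the language. -/
lemma prefix_mem (K' : Finset (Finset (Fin n))) (hK' : IsSimplicialComplex K')
    (u w : List (Fin n)) (h : u ++ w ∈ simplexLang K') : u ∈ simplexLang K' := by
  rw [mem_simplexLang_iff] at h ⊢
  rcases h with h | ⟨hs, hf⟩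
  · left; exact (List.append_eq_nil_iff.mp h).1
  · rcases eq_or_ne u [] with rfl | hu
    · left; rfl
    · right
      have hsu : u.Pairwise (· < ·) := (List.pairwise_append.mp hs).1
      refine ⟨hsu, hK'.2 _ hf u.toFinset ?_ ?_⟩
      · intro x hx
        simp only [List.toFinset_append, Finset.mem_union]
        exact Or.inl hx
      · simpa [← List.toFinset_eq_empty_iff] using hu

/-- If `u ∈ L` and the top element of `Fin n` is an entry of `u`, the quotient is `{[]}`. -/
lemma quot_eq_singleton (K' : Finset (Finset (Fin n))) (u : List (Fin n))
    (hu : u ∈ simplexLang K') (t : Fin n) (ht : ∀ x : Fin n, x ≤ t) (htu : t ∈ u) :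
    leftQuot (simplexLang K') u = {[]} := by
  ext w
  simp only [leftQuot, Set.mem_setOf_eq, Set.mem_singleton_iff]
  constructor
  · intro hw
    by_contra hwne
    rw [mem_simplexLang_iff] at hw
    rcases hw with h | ⟨hs, _⟩
    · exact hwne (List.append_eq_nil_iff.mp h).2
    · obtain ⟨b, hb⟩ := List.exists_mem_of_ne_nil w hwne
      have := (List.pairwise_append.mp hs).2.2 t htu b hb
      exact absurd (ht b) (not_le.mpr this)
  · rintro rfl
    simpa using hu

end Aux

theorem stmt7 (n d : ℕ) (K : Finset (Finset (Fin n)))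
    (hK : IsSimplicialComplex K) (hdim : HasDimension K d) (hd : 2 ≤ d) :
    ∃ π : Equiv.Perm (Fin n),
      (∃ u u' : List (Fin n),
          u ∈ simplexLang (K.image (fun σ => σ.image π)) ∧
          u' ∈ simplexLang (K.image (fun σ => σ.image π)) ∧ u ≠ u' ∧
          leftQuot (simplexLang (K.image (fun σ => σ.image π))) u =
            leftQuot (simplexLang (K.image (fun σ => σ.image π))) u') ∧
      (nonemptyQuotients (simplexLang (K.image (fun σ => σ.image π)))).ncard <
        K.card + 1 := by
  obtain ⟨⟨σ, hσK, hσcard⟩, hdimle⟩ := hdim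
  have hσne : σ.Nonempty := Finset.card_pos.mp (by omega)
  obtain ⟨v, hv⟩ := hσne
  -- the top element of Fin n
  have hn : 0 < n := v.pos
  set t : Fin n := ⟨n - 1, by omega⟩ with ht_def
  have ht : ∀ x : Fin n, x ≤ t := by
    intro x
    have := x.isLt
    simp only [Fin.le_def, ht_def]
    omega
  set π : Equiv.Perm (Fin n) := Equiv.swap v t with hπ_def
  refine ⟨π, ?_⟩
  set K' : Finset (Finset (Fin n)) := K.image (fun σ => σ.image π) with hK'_def
  -- K' is a simplicial complex
  have hK' : IsSimplicialComplex K' := by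
    constructor
    · intro s hs
      simp only [hK'_def, Finset.mem_image] at hs
      obtain ⟨a, haK, rfl⟩ := hs
      simpa [Finset.image_eq_empty] using hK.1 a haK
    · intro s hs τ hτs hτne
      simp only [hK'_def, Finset.mem_image] at hs ⊢
      obtain ⟨a, haK, rfl⟩ := hs
      refine ⟨τ.image π.symm, hK.2 a haK _ ?_ ?_, ?_⟩
      · intro x hx
        simp only [Finset.mem_image] at hx
        obtain ⟨y, hy, rfl⟩ := hx
        have := hτs hy
        simp only [Finset.mem_image] at this
        obtain ⟨z, hz, rfl⟩ := this
        simpa using hz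
      · simpa [Finset.image_eq_empty] using hτne
      · rw [Finset.image_image]
        simpa using Finset.image_id τ
  set L : Set (List (Fin n)) := simplexLang K' with hL_def
  set τ : Finset (Fin n) := σ.image π with hτ_def
  have hτK' : τ ∈ K' := Finset.mem_image_of_mem _ hσK
  have hτcard : τ.card = d + 1 := by
    rw [hτ_def, Finset.card_image_of_injective _ π.injective, hσcard]
  have hτne : τ.Nonempty := Finset.card_pos.mp (by omega)
  have htτ : t ∈ τ := by
    have : π v = t := Equiv.swap_apply_left v t
    rw [hτ_def]
    exact this ▸ Finset.mem_image_of_mem _ hv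
  set m : Fin n := τ.min' hτne with hm_def
  set τ' : Finset (Fin n) := τ.erase m with hτ'_def
  have hτ'sub : τ' ⊆ τ := Finset.erase_subset _ _
  have hτ'card : τ'.card = d := by
    rw [hτ'_def, Finset.card_erase_of_mem (τ.min'_mem hτne), hτcard]
    omega
  have hτ'ne : τ' ≠ ∅ := by
    intro h
    rw [h, Finset.card_empty] at hτ'card
    omega
  have hτ'K' : τ' ∈ K' := hK'.2 τ hτK' τ' hτ'sub hτ'ne
  have htτ' : t ∈ τ' := by
    rw [hτ'_def, Finset.mem_erase]
    refine ⟨?_, htτ⟩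
    -- t ≠ m since τ has at least 2 elements and t is a max
    obtain ⟨x, hxτ, hxm⟩ := Finset.exists_mem_ne (show 1 < τ.card by omega) m
    intro h
    have h1 : m ≤ x := τ.min'_le x hxτ
    have h2 : x ≤ t := ht x
    exact hxm (le_antisymm (h ▸ h2) h1)
  have hτneτ' : τ ≠ τ' := by
    intro h
    rw [h, hτ'card] at hτcard
    omega
  -- the words
  set u : List (Fin n) := τ.sort (· ≤ ·) with hu_def
  set u' : List (Fin n) := τ'.sort (· ≤ ·) with hu'_def
  have hu_sorted : u.Pairwise (· < ·) := (Finset.sortedLT_sort τ).pairwise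
  have hu'_sorted : u'.Pairwise (· < ·) := (Finset.sortedLT_sort τ').pairwise
  have hu_tf : u.toFinset = τ := Finset.sort_toFinset τ _
  have hu'_tf : u'.toFinset = τ' := Finset.sort_toFinset τ' _
  have huL : u ∈ L := by
    rw [hL_def, mem_simplexLang_iff]
    exact Or.inr ⟨hu_sorted, hu_tf ▸ hτK'⟩
  have hu'L : u' ∈ L := by
    rw [hL_def, mem_simplexLang_iff]
    exact Or.inr ⟨hu'_sorted, hu'_tf ▸ hτ'K'⟩
  have huneq : u ≠ u' := by
    intro h
    apply hτneτ'
    rw [← hu_tf, ← hu'_tf, h]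
  have htu : t ∈ u := by rw [← List.mem_toFinset, hu_tf]; exact htτ
  have htu' : t ∈ u' := by rw [← List.mem_toFinset, hu'_tf]; exact htτ'
  have hqu : leftQuot L u = {[]} := quot_eq_singleton K' u huL t ht htu
  have hqu' : leftQuot L u' = {[]} := quot_eq_singleton K' u' hu'L t ht htu'
  refine ⟨⟨u, u', huL, hu'L, huneq, by rw [hqu, hqu']⟩, ?_⟩
  -- counting
  set f : Finset (Fin n) → Set (List (Fin n)) := fun s => leftQuot L (s.sort (· ≤ ·)) with hf_def
  set F : Finset (Finset (Fin n)) := (insert ∅ K').erase τ' with hF_def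
  have hsub : nonemptyQuotients L ⊆ f '' ↑F := by
    rintro S ⟨hSne, u0, rfl⟩
    obtain ⟨w0, hw0⟩ := hSne
    have hu0L : u0 ∈ L := prefix_mem K' hK' u0 w0 hw0
    rw [hL_def, mem_simplexLang_iff] at hu0L
    have key : leftQuot L u0 = f u0.toFinset ∧ u0.toFinset ∈ insert ∅ K' := by
      rcases hu0L with rfl | ⟨hs, hf0⟩
      · constructor
        · simp [hf_def]
        · simp
      · constructor
        · show leftQuot L u0 = leftQuot L (u0.toFinset.sort (· ≤ ·))
          rw [(List.toFinset_sort _ hs.nodup).mpr (hs.imp le_of_lt)]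
        · exact Finset.mem_insert_of_mem hf0
      
    obtain ⟨heq, hmem⟩ := key
    rcases eq_or_ne u0.toFinset τ' with h | h
    · -- use τ instead
      refine ⟨τ, ?_, ?_⟩
      · simp only [hF_def, Finset.coe_erase, Set.mem_diff, Set.mem_singleton_iff]
        exact ⟨Finset.mem_insert_of_mem hτK', hτneτ'⟩
      · rw [heq, h]
        show f τ = f τ'
        rw [hf_def]
        simp only
        rw [← hu_def, ← hu'_def, hqu, hqu']
    · exact ⟨u0.toFinset, by simp only [hF_def, Finset.coe_erase, Set.mem_diff,
        Set.mem_singleton_iff]; exact ⟨hmem, h⟩, heq.symm⟩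
  have hKcard : K'.card = K.card := by
    rw [hK'_def]
    exact Finset.card_image_of_injective _ (fun a b hab => by
      have : (a.image π).image π.symm = (b.image π).image π.symm := by rw [hab]
      simpa [Finset.image_image, Finset.image_id'] using this)
  have hemptyK' : ∅ ∉ K' := fun h => hK'.1 ∅ h rfl
  have hFcard : F.card = K.card := by
    rw [hF_def, Finset.card_erase_of_mem (Finset.mem_insert_of_mem hτ'K'),
      Finset.card_insert_of_notMem hemptyK', hKcard]
    omega
  calc (nonemptyQuotients L).ncard ≤ (f '' ↑F).ncard :=
        Set.ncard_le_ncard hsub ((F.finite_toSet.image f))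
    _ ≤ F.card := by
        rw [← Set.ncard_coe_finset F]
        exact Set.ncard_image_le F.finite_toSet
    _ = K.card := hFcard
    _ < K.card + 1 := by omega
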